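/- Lipschitz dependence of the Fréchet mean on its arguments: let (H,d) be a Hadamard space, w₁,…,w_N positive weights with Σₙ wₙ = 1, and a₁,…,a_N, a₁′,…,a_N′ ∈ H. If Ξ is the unique minimizer of x ↦ Σₙ wₙ·d(x,aₙ)² and Ξ′ is the unique minimizer of x ↦ Σₙ wₙ·d(x,aₙ′)², then d(Ξ,Ξ′) ≤ Σₙ₌₁^N wₙ·d(aₙ,aₙ′). -/

import Mathlib

open Filter Topology

/-- A Hadamard space structure on a metric space `H`: a geodesic combination map
`geo x y t = (1-t)x ⊕ ty` satisfying the geodesic axioms and the CAT(0) inequality.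
(Completeness is imposed via the `CompleteSpace` instance in the theorems.) -/
structure Hadamard (H : Type*) [MetricSpace H] : Type _ where
  geo : H → H → ℝ → H
  geo_zero : ∀ x y : H, geo x y 0 = x
  geo_one : ∀ x y : H, geo x y 1 = y
  geo_dist : ∀ x y : H, ∀ s ∈ Set.Icc (0 : ℝ) 1, ∀ t ∈ Set.Icc (0 : ℝ) 1,
    dist (geo x y s) (geo x y t) = |s - t| * dist x y
  cat0 : ∀ z x y : H, ∀ t ∈ Set.Icc (0 : ℝ) 1,
    dist z (geo x y t) ^ 2
      ≤ (1 - t) * dist z x ^ 2 + t * dist z y ^ 2 - t * (1 - t) * dist x y ^ 2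

/-- A function `f : H → (-∞,∞]` is (geodesically) convex if along every geodesic
`t ↦ (1-t)x ⊕ ty` it satisfies the convexity inequality. -/
def GeoConvex {H : Type*} [MetricSpace H] (G : Hadamard H) (f : H → EReal) : Prop :=
  ∀ x y : H, ∀ t ∈ Set.Icc (0 : ℝ) 1,
    f (G.geo x y t) ≤ ((1 - t : ℝ) : EReal) * f x + ((t : ℝ) : EReal) * f y

section Aux

variable {H : Type*} [MetricSpace H]

/-- The ⊠ (quadrilateral) inequality: in a CAT(0) space, the sum of the squared
diagonals of a quadrilateral is at most the sum of the squared sides. -/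
lemma Hadamard.star (G : Hadamard H) (x y z w : H) :
    dist x w ^ 2 + dist y z ^ 2
      ≤ dist x y ^ 2 + dist x z ^ 2 + dist w y ^ 2 + dist w z ^ 2 := by
  have hhalf : (1/2 : ℝ) ∈ Set.Icc (0:ℝ) 1 := by norm_num
  have h1 := G.cat0 (G.geo y z (1/2)) x w (1/2) hhalf
  have h2 := G.cat0 x y z (1/2) hhalf
  have h3 := G.cat0 w y z (1/2) hhalf
  have h0 : (0:ℝ) ≤ dist (G.geo y z (1/2)) (G.geo x w (1/2)) ^ 2 := sq_nonneg _
  rw [dist_comm (G.geo y z (1/2)) x] at h1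
  rw [dist_comm (G.geo y z (1/2)) w] at h1
  nlinarith [h1, h2, h3, h0]

/-- Subdivision estimate: dividing the geodesics `x → y` and `z → w` into `n`
(resp. `m`) equal pieces and applying the ⊠-inequality to every small cell. -/
lemma Hadamard.grid (G : Hadamard H) (x y z w : H) {n m : ℕ} (hn : 0 < n) (hm : 0 < m) :
    dist x z ^ 2 + dist y w ^ 2 - dist x w ^ 2 - dist y z ^ 2
      ≤ m * dist x y ^ 2 / n + n * dist z w ^ 2 / m := by
  have hn' : (0:ℝ) < n := by exact_mod_cast hn
  have hm' : (0:ℝ) < m := by exact_mod_cast hm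
  set s : ℕ → H := fun i => G.geo x y (i / n) with hs
  set g : ℕ → H := fun j => G.geo z w (j / m) with hg
  set E : ℕ → ℕ → ℝ := fun i j => dist (s i) (g j) ^ 2 with hE
  have hmem : ∀ (i k : ℕ), i ≤ k → ((i:ℝ)/k) ∈ Set.Icc (0:ℝ) 1 := by
    intro i k hik
    rcases Nat.eq_zero_or_pos k with hk | hk
    · subst hk; simp
    · have hk' : (0:ℝ) < k := by exact_mod_cast hk
      constructor
      · positivity
      · rw [div_le_one hk']; exact_mod_cast hik
  have hside_s : ∀ i < n, dist (s (i+1)) (s i) = dist x y / n := by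
    intro i hi
    have h1 := G.geo_dist x y ((i+1:ℕ)/n) (by exact_mod_cast hmem (i+1) n hi)
      ((i:ℝ)/n) (hmem i n (le_of_lt hi))
    simp only [hs]
    push_cast at h1 ⊢
    rw [h1]
    rw [div_sub_div_same, add_sub_cancel_left, abs_of_nonneg (by positivity)]
    ring
  have hside_g : ∀ j < m, dist (g (j+1)) (g j) = dist z w / m := by
    intro j hj
    have h1 := G.geo_dist z w ((j+1:ℕ)/m) (by exact_mod_cast hmem (j+1) m hj)
      ((j:ℝ)/m) (hmem j m (le_of_lt hj))
    simp only [hg]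
    push_cast at h1 ⊢
    rw [h1]
    rw [div_sub_div_same, add_sub_cancel_left, abs_of_nonneg (by positivity)]
    ring
  have hcell : ∀ i < n, ∀ j < m,
      E (i+1) (j+1) + E i j - E i (j+1) - E (i+1) j
        ≤ (dist x y / n) ^ 2 + (dist z w / m) ^ 2 := by
    intro i hi j hj
    have hst := G.star (s (i+1)) (s i) (g j) (g (j+1))
    rw [dist_comm (g (j+1)) (s i), hside_s i hi, hside_g j hj] at hst
    simp only [hE]
    linarith [hst]
  have htel : ∑ i ∈ Finset.range n, ∑ j ∈ Finset.range m,
      (E (i+1) (j+1) + E i j - E i (j+1) - E (i+1) j)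
      = E n m - E 0 m - E n 0 + E 0 0 := by
    have inner : ∀ i, ∑ j ∈ Finset.range m,
        (E (i+1) (j+1) + E i j - E i (j+1) - E (i+1) j)
        = (E (i+1) m - E i m) - (E (i+1) 0 - E i 0) := by
      intro i
      have := Finset.sum_range_sub (fun j => E (i+1) j - E i j) m
      rw [← this]
      apply Finset.sum_congr rfl
      intro j _
      ring
    rw [Finset.sum_congr rfl (fun i _ => inner i)]
    have houter := Finset.sum_range_sub (fun i => E i m - E i 0) n
    have : ∑ i ∈ Finset.range n, (E (i+1) m - E i m - (E (i+1) 0 - E i 0))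
        = ∑ i ∈ Finset.range n,
          ((fun i => E i m - E i 0) (i+1) - (fun i => E i m - E i 0) i) := by
      apply Finset.sum_congr rfl
      intro i _
      ring
    rw [this, houter]
    ring
  have hs0 : s 0 = x := by simp [hs, G.geo_zero]
  have hsn : s n = y := by
    simp only [hs]
    rw [div_self (ne_of_gt hn'), G.geo_one]
  have hg0 : g 0 = z := by simp [hg, G.geo_zero]
  have hgm : g m = w := by
    simp only [hg]
    rw [div_self (ne_of_gt hm'), G.geo_one]
  have hsum : ∑ i ∈ Finset.range n, ∑ j ∈ Finset.range m,
      (E (i+1) (j+1) + E i j - E i (j+1) - E (i+1) j)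
      ≤ n * m * ((dist x y / n) ^ 2 + (dist z w / m) ^ 2) := by
    calc ∑ i ∈ Finset.range n, ∑ j ∈ Finset.range m,
        (E (i+1) (j+1) + E i j - E i (j+1) - E (i+1) j)
        ≤ ∑ i ∈ Finset.range n, ∑ j ∈ Finset.range m,
          ((dist x y / n) ^ 2 + (dist z w / m) ^ 2) := by
          apply Finset.sum_le_sum
          intro i hi
          apply Finset.sum_le_sum
          intro j hj
          exact hcell i (Finset.mem_range.mp hi) j (Finset.mem_range.mp hj)
      _ = n * m * ((dist x y / n) ^ 2 + (dist z w / m) ^ 2) := by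
          simp [Finset.sum_const, Finset.card_range]
          ring
  rw [htel, hE] at hsum
  simp only [hs0, hsn, hg0, hgm] at hsum
  have : (n:ℝ) * m * ((dist x y / n) ^ 2 + (dist z w / m) ^ 2)
      = m * dist x y ^ 2 / n + n * dist z w ^ 2 / m := by
    field_simp
  rw [this] at hsum
  linarith [hsum, dist_comm y w, dist_comm x w]

/-- The quadruple (Berg–Nikolaev / quasilinearization Cauchy–Schwarz) inequality in a
CAT(0) space. -/
lemma Hadamard.quad (G : Hadamard H) (x y z w : H) :
    dist x z ^ 2 + dist y w ^ 2
      ≤ dist x w ^ 2 + dist y z ^ 2 + 2 * dist x y * dist z w := by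
  set A := dist x y with hA
  set L := dist z w with hL
  rcases eq_or_lt_of_le (dist_nonneg : (0:ℝ) ≤ A) with hA0 | hA0
  · have hxy : x = y := by rw [← dist_le_zero]; exact le_of_eq hA0.symm
    subst hxy
    nlinarith [dist_nonneg (x := x) (y := z), dist_nonneg (x := z) (y := w)]
  rcases eq_or_lt_of_le (dist_nonneg : (0:ℝ) ≤ L) with hL0 | hL0
  · have hzw : z = w := by rw [← dist_le_zero]; exact le_of_eq hL0.symm
    subst hzw
    nlinarith [dist_nonneg (x := x) (y := z)]
  have key : dist x z ^ 2 + dist y w ^ 2 - dist x w ^ 2 - dist y z ^ 2 ≤ 2 * A * L := by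
    apply le_of_forall_pos_le_add
    intro ε hε
    obtain ⟨q, hq1, hq2⟩ := exists_rat_btwn (show A / L < A / L + ε / L ^ 2 by
      have : (0:ℝ) < ε / L ^ 2 := by positivity
      linarith)
    have hq0 : (0:ℝ) < (q:ℝ) := lt_trans (by positivity) hq1
    have hqnum : 0 < q.num := by
      rwa [Rat.num_pos, ← Rat.cast_pos (K := ℝ)]
    set n : ℕ := q.num.toNat with hn
    set m : ℕ := q.den with hm
    have hnpos : 0 < n := by omega
    have hmpos : 0 < m := q.pos
    have hnr : (n:ℝ) = (q.num:ℝ) := by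
      rw [hn]; exact_mod_cast Int.toNat_of_nonneg (le_of_lt hqnum)
    have hmr : (m:ℝ) = (q.den:ℝ) := by norm_cast
    have hnr' : (0:ℝ) < (n:ℝ) := by exact_mod_cast hnpos
    have hmr' : (0:ℝ) < (m:ℝ) := by exact_mod_cast hmpos
    have hqval : (q:ℝ) = (n:ℝ) / (m:ℝ) := by
      rw [hnr, hmr, Rat.cast_def]
    have hmain := G.grid x y z w hnpos hmpos
    have h1 : (m:ℝ) * A ^ 2 / n ≤ A * L := by
      rw [div_le_iff₀ hnr']
      have : A / L < (n:ℝ) / m := by rwa [hqval] at hq1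
      rw [div_lt_div_iff₀ hL0 hmr'] at this
      nlinarith
    have h2 : (n:ℝ) * L ^ 2 / m ≤ A * L + ε := by
      rw [div_le_iff₀ hmr']
      have : (n:ℝ) / m < A / L + ε / L ^ 2 := by rwa [hqval] at hq2
      have h3 : (n:ℝ) / m < (A * L + ε) / L ^ 2 := by
        have : (A * L + ε) / L ^ 2 = A / L + ε / L ^ 2 := by field_simp
        linarith [this]
      rw [div_lt_div_iff₀ hmr' (by positivity : (0:ℝ) < L ^ 2)] at h3
      nlinarith
    linarith
  linarith

/-- The variance inequality for a minimizer of the weighted sum of squared distances. -/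
lemma Hadamard.varineq (G : Hadamard H) {N : ℕ} (w : Fin N → ℝ) (hw : ∀ n, 0 < w n)
    (hsum : ∑ n, w n = 1) (a : Fin N → H) (Ξ : H)
    (hΞ : ∀ x : H, ∑ n, w n * dist Ξ (a n) ^ 2 ≤ ∑ n, w n * dist x (a n) ^ 2)
    (x : H) :
    (∑ n, w n * dist Ξ (a n) ^ 2) + dist x Ξ ^ 2 ≤ ∑ n, w n * dist x (a n) ^ 2 := by
  set F : H → ℝ := fun p => ∑ n, w n * dist p (a n) ^ 2 with hF
  set D : ℝ := dist x Ξ with hD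
  have hD0 : (0:ℝ) ≤ D := dist_nonneg
  have key : ∀ t : ℝ, 0 < t → t ≤ 1 → F Ξ + (1 - t) * D ^ 2 ≤ F x := by
    intro t ht0 ht1
    have htmem : t ∈ Set.Icc (0:ℝ) 1 := ⟨le_of_lt ht0, ht1⟩
    have h1 : F Ξ ≤ F (G.geo Ξ x t) := hΞ (G.geo Ξ x t)
    have h2 : F (G.geo Ξ x t)
        ≤ (1 - t) * F Ξ + t * F x - t * (1 - t) * D ^ 2 := by
      have hterm : ∀ n : Fin N, w n * dist (G.geo Ξ x t) (a n) ^ 2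
          ≤ (1 - t) * (w n * dist Ξ (a n) ^ 2) + t * (w n * dist x (a n) ^ 2)
            - (t * (1 - t) * D ^ 2) * w n := by
        intro n
        have hc := G.cat0 (a n) Ξ x t htmem
        rw [dist_comm (a n) (G.geo Ξ x t), dist_comm (a n) Ξ, dist_comm (a n) x,
          dist_comm Ξ x] at hc
        have := mul_le_mul_of_nonneg_left hc (le_of_lt (hw n))
        nlinarith [this]
      calc F (G.geo Ξ x t) = ∑ n, w n * dist (G.geo Ξ x t) (a n) ^ 2 := rfl
        _ ≤ ∑ n, ((1 - t) * (w n * dist Ξ (a n) ^ 2) + t * (w n * dist x (a n) ^ 2)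
            - (t * (1 - t) * D ^ 2) * w n) := Finset.sum_le_sum (fun n _ => hterm n)
        _ = (1 - t) * F Ξ + t * F x - t * (1 - t) * D ^ 2 := by
          rw [Finset.sum_sub_distrib, Finset.sum_add_distrib, ← Finset.mul_sum,
            ← Finset.mul_sum, ← Finset.mul_sum, hsum, mul_one]
    have h3 : t * F Ξ + t * (1 - t) * D ^ 2 ≤ t * F x := by nlinarith [h1, h2]
    have := (mul_le_mul_iff_right₀ ht0).mp (by linarith [h3] : t * (F Ξ + (1-t) * D ^ 2) ≤ t * F x)
    linarith [this]
  apply le_of_forall_pos_le_add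
  intro ε hε
  rcases eq_or_lt_of_le hD0 with hD0' | hD0'
  · have := hΞ x
    simp only [← hD0', ne_eq] at *
    nlinarith [this]
  · set t : ℝ := min 1 (ε / D ^ 2) with htdef
    have ht0 : 0 < t := lt_min one_pos (by positivity)
    have ht1 : t ≤ 1 := min_le_left _ _
    have htD : t * D ^ 2 ≤ ε := by
      have : t ≤ ε / D ^ 2 := min_le_right _ _
      calc t * D ^ 2 ≤ (ε / D ^ 2) * D ^ 2 := by nlinarith
        _ = ε := by field_simp
    have := key t ht0 ht1
    nlinarith [this]

end Aux

/-- Lipschitz dependence of the Fréchet mean on its arguments. -/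
theorem frechet_mean_lipschitz
    {H : Type*} [MetricSpace H] [CompleteSpace H] (G : Hadamard H)
    (N : ℕ) (w : Fin N → ℝ) (hw : ∀ n, 0 < w n) (hsum : ∑ n, w n = 1)
    (a a' : Fin N → H) (Ξ Ξ' : H)
    (hΞ : ∀ x : H, ∑ n, w n * dist Ξ (a n) ^ 2 ≤ ∑ n, w n * dist x (a n) ^ 2)
    (hΞ' : ∀ x : H, ∑ n, w n * dist Ξ' (a' n) ^ 2 ≤ ∑ n, w n * dist x (a' n) ^ 2) :
    dist Ξ Ξ' ≤ ∑ n, w n * dist (a n) (a' n) := by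
  set D : ℝ := dist Ξ Ξ' with hD
  set S : ℝ := ∑ n, w n * dist (a n) (a' n) with hS
  have hD0 : (0:ℝ) ≤ D := dist_nonneg
  have hS0 : (0:ℝ) ≤ S := Finset.sum_nonneg (fun n _ =>
    mul_nonneg (le_of_lt (hw n)) dist_nonneg)
  have v1 := G.varineq w hw hsum a Ξ hΞ Ξ'
  have v2 := G.varineq w hw hsum a' Ξ' hΞ' Ξ
  -- quadruple inequality for each n, weighted
  have hq : ∀ n : Fin N, w n * dist Ξ' (a n) ^ 2 + w n * dist Ξ (a' n) ^ 2
      ≤ w n * dist Ξ' (a' n) ^ 2 + w n * dist Ξ (a n) ^ 2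
        + 2 * D * (w n * dist (a n) (a' n)) := by
    intro n
    have hqd := G.quad Ξ' Ξ (a n) (a' n)
    rw [dist_comm Ξ' Ξ] at hqd
    nlinarith [mul_le_mul_of_nonneg_left hqd (le_of_lt (hw n))]
  have hqsum : (∑ n, w n * dist Ξ' (a n) ^ 2) + (∑ n, w n * dist Ξ (a' n) ^ 2)
      ≤ (∑ n, w n * dist Ξ' (a' n) ^ 2) + (∑ n, w n * dist Ξ (a n) ^ 2) + 2 * D * S := by
    have := Finset.sum_le_sum (fun n (_ : n ∈ Finset.univ) => hq n)
    rw [Finset.sum_add_distrib, Finset.sum_add_distrib, Finset.sum_add_distrib,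
      ← Finset.mul_sum] at this
    exact this
  -- combine: 2 D^2 ≤ 2 D S
  have hDD : 2 * D ^ 2 ≤ 2 * D * S := by
    have e1 : dist Ξ' Ξ = D := dist_comm Ξ' Ξ
    nlinarith [v1, v2, hqsum, sq_nonneg (dist Ξ' Ξ - D), e1]
  rcases eq_or_lt_of_le hD0 with hD0' | hD0'
  · linarith [hD0'.symm ▸ hS0]
  · nlinarith [hDD, hD0']
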